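/- Let d ≥ 1, let A, B ∈ ℝ^{d×d} be invertible, and suppose A B Bᵀ Aᵀ = a² B Bᵀ for some nonzero a ∈ ℝ. Then for every n ≥ 1 and Δz ∈ ℝ^d: (i) the n-step covariance Σ_n = Σ_{k=0}^{n-1} Aᵏ B Bᵀ (Aᵀ)ᵏ equals (Σ_{k=0}^{n-1} a^{2k}) B Bᵀ; (ii) |Σ_n^{-1/2} Aⁿ Δz|² = (Σ_{k=1}^n a^{-2k})^{-1} |B^{-1} Δz|²; (iii) Σ_{k=1}^n |B^{-1} Aᵏ Δz|^{-2} = |B^{-1}Δz|^{-2} Σ_{k=1}^n a^{-2k} (assuming Δz ≠ 0). -/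

import Mathlib

open Matrix Finset

lemma oneShot_sq_sum {d : ℕ} (C : Matrix (Fin d) (Fin d) ℝ) (v : Fin d → ℝ) :
    ∑ i, (C.mulVec v i) ^ 2 = v ⬝ᵥ ((Cᵀ * C).mulVec v) := by
  rw [← mulVec_mulVec, dotProduct_mulVec, vecMul_transpose]
  simp [dotProduct, sq]

lemma oneShot_inv_geom (b : ℝ) (hb : b ≠ 0) (n : ℕ) :
    ∑ k ∈ Finset.Icc 1 n, (b ^ k)⁻¹ = (∑ k ∈ Finset.range n, b ^ k) / b ^ n := by
  induction n with
  | zero => simp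
  | succ n ih =>
    rw [Finset.sum_Icc_succ_top (by omega), ih, geom_sum_succ]
    have h1 : b ^ n ≠ 0 := pow_ne_zero _ hb
    have h2 : b ^ (n + 1) ≠ 0 := pow_ne_zero _ hb
    field_simp
    ring

theorem oneShot_homogeneous_identities {d : ℕ} (hd : 1 ≤ d)
    (A B : Matrix (Fin d) (Fin d) ℝ) (hA : IsUnit A.det) (hB : IsUnit B.det)
    (a : ℝ) (ha : a ≠ 0)
    (hcond : A * (B * Bᵀ) * Aᵀ = a ^ 2 • (B * Bᵀ))
    (n : ℕ) (hn : 1 ≤ n) (Δz : Fin d → ℝ)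
    (Gram : Matrix (Fin d) (Fin d) ℝ)
    (hGram : Gram = ∑ k ∈ Finset.range n, A ^ k * (B * Bᵀ) * (Aᵀ) ^ k)
    (hpos : Gram.PosDef) :
    Gram = (∑ k ∈ Finset.range n, a ^ (2 * k)) • (B * Bᵀ) ∧
      (∑ i, ((((hpos.posSemidef.1.eigenvectorUnitary : Matrix (Fin d) (Fin d) ℝ) *
          diagonal ((RCLike.ofReal : ℝ → ℝ) ∘ (√·) ∘ hpos.posSemidef.1.eigenvalues) *
          (star hpos.posSemidef.1.eigenvectorUnitary : Matrix (Fin d) (Fin d) ℝ))⁻¹.mulVec ((A ^ n).mulVec Δz)) i) ^ 2 =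
        (∑ k ∈ Finset.Icc 1 n, a ^ (-(2 * (k : ℤ))))⁻¹ *
          ∑ i, ((B⁻¹.mulVec Δz) i) ^ 2) ∧
      (Δz ≠ 0 →
        ∑ k ∈ Finset.Icc 1 n, (∑ i, ((B⁻¹.mulVec ((A ^ k).mulVec Δz)) i) ^ 2)⁻¹ =
          (∑ i, ((B⁻¹.mulVec Δz) i) ^ 2)⁻¹ *
            ∑ k ∈ Finset.Icc 1 n, a ^ (-(2 * (k : ℤ)))) := by
  set M : Matrix (Fin d) (Fin d) ℝ := B * Bᵀ with hM
  set N : Matrix (Fin d) (Fin d) ℝ := B⁻¹ᵀ * B⁻¹ with hN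
  have ha2 : (0:ℝ) < a ^ 2 := by positivity
  -- basic inverses
  have hBi : B⁻¹ * B = 1 := nonsing_inv_mul B hB
  have hBi' : B * B⁻¹ = 1 := mul_nonsing_inv B hB
  have hAi : A⁻¹ * A = 1 := nonsing_inv_mul A hA
  have hMN : M * N = 1 := by
    have h1 : Bᵀ * B⁻¹ᵀ = 1 := by rw [← transpose_mul, hBi, transpose_one]
    calc M * N = B * (Bᵀ * B⁻¹ᵀ) * B⁻¹ := by rw [hM, hN]; simp only [mul_assoc]
      _ = 1 := by rw [h1, mul_one, hBi']
  have hNM : N * M = 1 := by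
    have h1 : B⁻¹ᵀ * Bᵀ = 1 := by rw [← transpose_mul, hBi', transpose_one]
    calc N * M = B⁻¹ᵀ * (B⁻¹ * B) * Bᵀ := by rw [hM, hN]; simp only [mul_assoc]
      _ = 1 := by rw [hBi, mul_one, h1]
  -- powers conjugation identity
  have h1 : ∀ k : ℕ, A ^ k * M * (Aᵀ) ^ k = a ^ (2 * k) • M := by
    intro k
    induction k with
    | zero => simp
    | succ k ih =>
      have : A ^ (k + 1) * M * Aᵀ ^ (k + 1) = A ^ k * (A * M * Aᵀ) * Aᵀ ^ k := by
        rw [pow_succ A, pow_succ' Aᵀ]; simp only [mul_assoc]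
      rw [this, hcond, mul_smul_comm, smul_mul_assoc, ih, smul_smul, ← pow_add,
        show 2 + 2 * k = 2 * (k + 1) from by omega]
  -- part (i)
  set c : ℝ := ∑ k ∈ Finset.range n, a ^ (2 * k) with hc
  have hterm : ∀ k : ℕ, (0:ℝ) < a ^ (2 * k) := by
    intro k; rw [pow_mul]; exact pow_pos ha2 k
  have hcpos : 0 < c := by
    refine Finset.sum_pos (fun k _ => hterm k) ⟨0, Finset.mem_range.mpr hn⟩
  have hG1 : Gram = c • M := by
    rw [hGram, hc, Finset.sum_smul]
    exact Finset.sum_congr rfl fun k _ => h1 k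
  -- one-step quadratic identity
  have hstepM : M * Aᵀ = a ^ 2 • (A⁻¹ * M) := by
    have h := congrArg (fun X => A⁻¹ * X) hcond
    simp only [← mul_assoc] at h
    rw [hAi, one_mul] at h
    rw [h, mul_smul_comm]
  have hcond' : Aᵀ * N * A = a ^ 2 • N := by
    have e1 : N * (M * Aᵀ) * (N * A) = Aᵀ * N * A := by
      simp only [← mul_assoc]
      rw [hNM, one_mul]
    rw [← e1, hstepM, mul_smul_comm, smul_mul_assoc]
    congr 1
    have e2 : M * (N * A) = A := by rw [← mul_assoc, hMN, one_mul]
    calc N * (A⁻¹ * M) * (N * A) = N * (A⁻¹ * (M * (N * A))) := by simp only [mul_assoc]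
      _ = N := by rw [e2, hAi, mul_one]
  have hstep : ∀ w : Fin d → ℝ,
      ∑ i, (B⁻¹.mulVec (A.mulVec w) i) ^ 2 = a ^ 2 * ∑ i, (B⁻¹.mulVec w i) ^ 2 := by
    intro w
    rw [mulVec_mulVec, oneShot_sq_sum, oneShot_sq_sum]
    have : (B⁻¹ * A)ᵀ * (B⁻¹ * A) = a ^ 2 • (B⁻¹ᵀ * B⁻¹) := by
      rw [transpose_mul]
      calc Aᵀ * B⁻¹ᵀ * (B⁻¹ * A) = Aᵀ * N * A := by rw [hN]; simp only [mul_assoc]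
        _ = a ^ 2 • N := hcond'
    rw [this, smul_mulVec, dotProduct_smul, smul_eq_mul]
  have hq : ∀ (k : ℕ) (z : Fin d → ℝ),
      ∑ i, (B⁻¹.mulVec ((A ^ k).mulVec z) i) ^ 2 = a ^ (2 * k) * ∑ i, (B⁻¹.mulVec z i) ^ 2 := by
    intro k z
    induction k with
    | zero => simp
    | succ k ih =>
      rw [pow_succ' A, ← mulVec_mulVec, hstep, ih, ← mul_assoc, ← pow_add,
        show 2 + 2 * k = 2 * (k + 1) from by omega]
  -- the Icc sum
  have hzp : ∀ k : ℕ, a ^ (-(2 * (k : ℤ))) = ((a ^ 2) ^ k)⁻¹ := by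
    intro k
    rw [_root_.zpow_neg, ← pow_mul]
    norm_cast
  have hccast : c = ∑ k ∈ Finset.range n, (a ^ 2) ^ k := by
    rw [hc]; exact Finset.sum_congr rfl fun k _ => by rw [pow_mul]
  have hIcc : ∑ k ∈ Finset.Icc 1 n, a ^ (-(2 * (k : ℤ))) = c / (a ^ 2) ^ n := by
    rw [show (∑ k ∈ Finset.Icc 1 n, a ^ (-(2 * (k : ℤ))))
        = ∑ k ∈ Finset.Icc 1 n, ((a ^ 2) ^ k)⁻¹ from
        Finset.sum_congr rfl fun k _ => hzp k,
      oneShot_inv_geom (a ^ 2) (ne_of_gt ha2) n, hccast]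
  refine ⟨hG1, ?_, ?_⟩
  · -- part (ii)
    set S := ((hpos.posSemidef.1.eigenvectorUnitary : Matrix (Fin d) (Fin d) ℝ) *
          diagonal ((RCLike.ofReal : ℝ → ℝ) ∘ (√·) ∘ hpos.posSemidef.1.eigenvalues) *
          (star hpos.posSemidef.1.eigenvectorUnitary : Matrix (Fin d) (Fin d) ℝ)) with hS
    have hS2 : S * S = Gram := by
      have hUU : (star hpos.posSemidef.1.eigenvectorUnitary : Matrix (Fin d) (Fin d) ℝ) *
          (hpos.posSemidef.1.eigenvectorUnitary : Matrix (Fin d) (Fin d) ℝ) = 1 := by simp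
      have hDD : diagonal ((RCLike.ofReal : ℝ → ℝ) ∘ (√·) ∘ hpos.posSemidef.1.eigenvalues) *
          diagonal ((RCLike.ofReal : ℝ → ℝ) ∘ (√·) ∘ hpos.posSemidef.1.eigenvalues) =
          diagonal ((RCLike.ofReal : ℝ → ℝ) ∘ hpos.posSemidef.1.eigenvalues) := by
        rw [diagonal_mul_diagonal]
        congr 1; funext v
        simp [Real.mul_self_sqrt (hpos.posSemidef.eigenvalues_nonneg v)]
      conv_rhs => rw [hpos.posSemidef.1.spectral_theorem, Unitary.conjStarAlgAut_apply]
      rw [hS, ← hDD]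
      calc _ = (hpos.posSemidef.1.eigenvectorUnitary : Matrix (Fin d) (Fin d) ℝ) *
          diagonal ((RCLike.ofReal : ℝ → ℝ) ∘ (√·) ∘ hpos.posSemidef.1.eigenvalues) *
          ((star hpos.posSemidef.1.eigenvectorUnitary : Matrix (Fin d) (Fin d) ℝ) *
          (hpos.posSemidef.1.eigenvectorUnitary : Matrix (Fin d) (Fin d) ℝ)) *
          diagonal ((RCLike.ofReal : ℝ → ℝ) ∘ (√·) ∘ hpos.posSemidef.1.eigenvalues) *
          (star hpos.posSemidef.1.eigenvectorUnitary : Matrix (Fin d) (Fin d) ℝ) := by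
            simp only [mul_assoc]
        _ = _ := by rw [hUU, mul_one]; simp only [mul_assoc]
    have hSsym : Sᵀ = S := by
      rw [hS, transpose_mul, transpose_mul, diagonal_transpose, ← conjTranspose_eq_transpose_of_trivial,
        ← conjTranspose_eq_transpose_of_trivial, ← star_eq_conjTranspose, ← star_eq_conjTranspose,
        star_star, mul_assoc]
    have hGraminv : Gram⁻¹ = c⁻¹ • N := by
      apply inv_eq_right_inv
      rw [hG1, smul_mul_assoc, mul_smul_comm, smul_smul, hMN,
        mul_inv_cancel₀ (ne_of_gt hcpos), one_smul]
    have hSinv : (S⁻¹)ᵀ * S⁻¹ = c⁻¹ • N := by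
      rw [transpose_nonsing_inv, hSsym, ← Matrix.mul_inv_rev, hS2, hGraminv]
    rw [oneShot_sq_sum, hSinv, smul_mulVec, dotProduct_smul, smul_eq_mul,
      hN, ← oneShot_sq_sum, hq n Δz, hIcc]
    have hpn : ((a:ℝ) ^ 2) ^ n ≠ 0 := pow_ne_zero _ (ne_of_gt ha2)
    rw [pow_mul]
    field_simp
  · -- part (iii)
    intro hz
    have hu : B⁻¹.mulVec Δz ≠ 0 := by
      intro h
      apply hz
      have : B.mulVec (B⁻¹.mulVec Δz) = Δz := by
        rw [mulVec_mulVec, hBi', one_mulVec]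
      rw [h, Matrix.mulVec_zero] at this
      exact this.symm
    set Q : ℝ := ∑ i, (B⁻¹.mulVec Δz i) ^ 2 with hQ
    have hQpos : 0 < Q := by
      rcases Function.ne_iff.mp hu with ⟨i, hi⟩
      refine Finset.sum_pos' (fun j _ => sq_nonneg _) ⟨i, Finset.mem_univ i, ?_⟩
      simpa using pow_pos (abs_pos.mpr hi) 2 |>.trans_le (by rw [sq_abs])
    calc ∑ k ∈ Finset.Icc 1 n, (∑ i, (B⁻¹.mulVec ((A ^ k).mulVec Δz) i) ^ 2)⁻¹
        = ∑ k ∈ Finset.Icc 1 n, (a ^ (2 * k) * Q)⁻¹ :=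
          Finset.sum_congr rfl fun k _ => by rw [hq k Δz]
      _ = Q⁻¹ * ∑ k ∈ Finset.Icc 1 n, a ^ (-(2 * (k : ℤ))) := by
          rw [Finset.mul_sum]
          refine Finset.sum_congr rfl fun k _ => ?_
          rw [hzp k, mul_inv, ← pow_mul]
          ring
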